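/- Let S ⊆ ℂ be a finite set with at least two elements, let d_min(S) = min{|x - x'| : x, x' ∈ S, x ≠ x'}, let T be any type, and let f : S × S → T satisfy the exclusive law. Then for every z ∈ ℂ, the minimum cluster distance of f at z satisfies d_f(z) ≤ min(d_min(S), |z|·d_min(S)), where d_f(z) = min{|(x_A - x_A') + z·(x_B - x_B')| : (x_A,x_B), (x_A',x_B') ∈ S × S, f(x_A,x_B) ≠ f(x_A',x_B')}. -/

import Mathlib

/-- For a finite `S ⊆ ℂ` with at least two elements and any map
`f : S × S → T` satisfying the exclusive law, for every `z ∈ ℂ` the minimum cluster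
distance of `f` at `z` is at most `min(d_min(S), |z|·d_min(S))`. -/
theorem min_cluster_distance_upper_bound {T : Type*} (S : Finset ℂ) (hS : 2 ≤ S.card)
    (f : ℂ → ℂ → T)
    (hex1 : ∀ x ∈ S, ∀ x' ∈ S, ∀ y ∈ S, x ≠ x' → f x y ≠ f x' y)
    (hex2 : ∀ x ∈ S, ∀ y ∈ S, ∀ y' ∈ S, y ≠ y' → f x y ≠ f x y')
    (z : ℂ)
    (dminS : ℝ)
    (hdminS : dminS = sInf {r : ℝ | ∃ x ∈ S, ∃ x' ∈ S, x ≠ x' ∧ r = ‖x - x'‖})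
    (df : ℝ)
    (hdf : df = sInf {r : ℝ | ∃ xA ∈ S, ∃ xB ∈ S, ∃ xA' ∈ S, ∃ xB' ∈ S,
      f xA xB ≠ f xA' xB' ∧ r = ‖(xA - xA') + z * (xB - xB')‖}) :
    df ≤ min dminS (‖z‖ * dminS) := by
  set D : Set ℝ := {r : ℝ | ∃ xA ∈ S, ∃ xB ∈ S, ∃ xA' ∈ S, ∃ xB' ∈ S,
      f xA xB ≠ f xA' xB' ∧ r = ‖(xA - xA') + z * (xB - xB')‖} with hD
  set R : Set ℝ := {r : ℝ | ∃ x ∈ S, ∃ x' ∈ S, x ≠ x' ∧ r = ‖x - x'‖} with hR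
  have hDbdd : BddBelow D := by
    refine ⟨0, ?_⟩
    rintro r ⟨a, -, b, -, c, -, d, -, -, rfl⟩
    exact norm_nonneg _
  -- R nonempty
  obtain ⟨x, hx, x', hx', hne⟩ := Finset.one_lt_card.mp hS
  have hRne : R.Nonempty := ⟨_, x, hx, x', hx', hne, rfl⟩
  -- key: for each r ∈ R, df ≤ r and df ≤ |z| * r
  have key1 : ∀ r ∈ R, df ≤ r := by
    rintro r ⟨a, ha, b, hb, hab, rfl⟩
    have hmem : ‖a - b‖ ∈ D := by
      refine ⟨a, ha, a, ha, b, hb, a, ha, hex1 a ha b hb a ha hab, ?_⟩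
      ring_nf
    rw [hdf]; exact csInf_le hDbdd hmem
  have key2 : ∀ r ∈ R, df ≤ ‖z‖ * r := by
    rintro r ⟨a, ha, b, hb, hab, rfl⟩
    have hmem : ‖z‖ * ‖a - b‖ ∈ D := by
      refine ⟨a, ha, a, ha, a, ha, b, hb, hex2 a ha a ha b hb hab, ?_⟩
      rw [← norm_mul]; ring_nf
    rw [hdf]; exact csInf_le hDbdd hmem
  refine le_min ?_ ?_
  · rw [hdminS]; exact le_csInf hRne key1
  · rcases eq_or_lt_of_le (norm_nonneg z) with h0 | h0
    · have := key2 _ hRne.some_mem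
      rw [← h0] at this ⊢
      simpa using this
    · rw [hdminS]
      rw [show ‖z‖ * sInf R = sInf R * ‖z‖ by ring, ← div_le_iff₀ h0]
      refine le_csInf hRne fun r hr => ?_
      rw [div_le_iff₀ h0, mul_comm]
      exact key2 r hr
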